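/- For every k and every j with j ≤ k, the (k+1+j)-th iterate of the step function on init_k equals the configuration (Q2, tape_{k-j}, k-j); that is, during its leftward sweep the machine M stays in state Q2, replaces the 1s by 0s one per step from right to left, and moves its head leftward one cell per step. -/
import Mathlib


/-- Configurations of the 3-state Turing machine: (state, tape, head position). -/
abbrev Config : Type := Fin 3 × (ℕ → Bool) × ℕ

/-- The total step function of the machine M. State 0 = Q1, 1 = Q2, 2 = Q3 (halt). -/
def step (c : Config) : Config :=
  match c with
  | (q, T, p) =>
    if q = 0 then (if T p then (0, T, p + 1) else (1, T, p - 1))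
    else if q = 1 then
      (if T p then (1, Function.update T p false, p - 1) else (2, T, p + 1))
    else (2, T, p)

/-- The input tape 0 1^k 0 0 ⋯ : cell i holds 1 iff 1 ≤ i ≤ k. -/
def tape (k : ℕ) : ℕ → Bool := fun i => decide (1 ≤ i ∧ i ≤ k)

/-- Initial configuration on input 0 1^k: state Q1, scanning cell 1. -/
def init (k : ℕ) : Config := (0, tape k, 1)

lemma phase1 (k i : ℕ) (hi : i ≤ k) : step^[i] (init k) = (0, tape k, 1 + i) := by
  induction i with
  | zero => simp [init]
  | succ n ih =>
    rw [Function.iterate_succ_apply', ih (Nat.le_of_succ_le hi)]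
    have ht : tape k (1 + n) = true := by
      simp [tape]; omega
    simp [step, ht]
    omega

lemma phase1_end (k : ℕ) : step^[k + 1] (init k) = (1, tape k, k) := by
  rw [Function.iterate_succ_apply', phase1 k k le_rfl]
  have ht : tape k (1 + k) = false := by simp [tape]
  simp [step, ht]

lemma sweep_step (m : ℕ) (hm : 1 ≤ m) :
    step (1, tape m, m) = (1, tape (m - 1), m - 1) := by
  have ht : tape m m = true := by simp [tape]; omega
  simp [step, ht]
  funext i
  by_cases h : i = m
  · subst h
    simp [tape]; omega
  · rw [Function.update_of_ne h]
    simp only [tape, decide_eq_decide]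
    omega

/-- During its leftward sweep, M stays in state Q2, replaces the 1s by 0s one per
step from right to left, and moves its head leftward one cell per step. -/
theorem leftward_sweep (k j : ℕ) (hj : j ≤ k) :
    step^[k + 1 + j] (init k) = (1, tape (k - j), k - j) := by
  induction j with
  | zero => simpa using phase1_end k
  | succ n ih =>
    have hn : n ≤ k := Nat.le_of_succ_le hj
    rw [show k + 1 + (n + 1) = (k + 1 + n) + 1 by ring, Function.iterate_succ_apply',
      ih hn]
    have h1 : 1 ≤ k - n := by omega
    rw [sweep_step _ h1]
    congr 2
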